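/- Every finitely generated solvable group in which every subgroup is finitely generated (i.e., a Noetherian solvable group) is polycyclic. -/

import Mathlib

/-- A group is polycyclic if it has a subnormal series with cyclic factors. -/
def IsPolycyclic (G : Type*) [Group G] : Prop :=
  ∃ (n : ℕ) (f : Fin (n + 1) → Subgroup G),
    f 0 = ⊥ ∧ f (Fin.last n) = ⊤ ∧
    ∀ i : Fin n, f i.castSucc ≤ f i.succ ∧
      ∃ _ : ((f i.castSucc).subgroupOf (f i.succ)).Normal,
        IsCyclic ((f i.succ) ⧸ (f i.castSucc).subgroupOf (f i.succ))


lemma isPolycyclic_of_subsingleton {G : Type*} [Group G] [Subsingleton G] : IsPolycyclic G := by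
  refine ⟨0, fun _ => ⊥, rfl, Subsingleton.elim _ _, fun i => i.elim0⟩

lemma isPolycyclic_of_isCyclic {G : Type*} [Group G] (h : IsCyclic G) : IsPolycyclic G := by
  refine ⟨1, ![⊥, ⊤], rfl, rfl, fun i => ?_⟩
  have h0 : i = 0 := Subsingleton.elim _ _
  subst h0
  refine ⟨bot_le, ?_⟩
  simp only [Fin.castSucc_zero, Fin.succ_zero_eq_one, Matrix.cons_val_zero, Matrix.cons_val_one,
    Matrix.head_cons]
  haveI hn : ((⊥ : Subgroup G).subgroupOf ⊤).Normal := by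
    rw [Subgroup.bot_subgroupOf]; infer_instance
  refine ⟨hn, ?_⟩
  haveI : IsCyclic ↥(⊤ : Subgroup G) :=
    isCyclic_of_surjective Subgroup.topEquiv.symm Subgroup.topEquiv.symm.surjective
  change IsCyclic (↥(⊤ : Subgroup G) ⧸ (⊥ : Subgroup G).subgroupOf ⊤)
  exact isCyclic_of_surjective (QuotientGroup.mk' ((⊥ : Subgroup G).subgroupOf ⊤))
    (QuotientGroup.mk'_surjective _)

lemma poly_step_transfer {H K : Type*} [Group H] [Group K] (A B : Subgroup H) (A' B' : Subgroup K)
    (f : ↥B' →* ↥B) (hf : Function.Surjective f)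
    (hker : ∀ x : ↥B', f x ∈ A.subgroupOf B ↔ x ∈ A'.subgroupOf B')
    (hN : (A.subgroupOf B).Normal) (hcyc : IsCyclic (↥B ⧸ A.subgroupOf B)) :
    ∃ _ : ((A'.subgroupOf B')).Normal, IsCyclic (↥B' ⧸ A'.subgroupOf B') := by
  let φ : ↥B' →* ↥B ⧸ A.subgroupOf B := (QuotientGroup.mk' (A.subgroupOf B)).comp f
  have hφs : Function.Surjective φ := (QuotientGroup.mk'_surjective _).comp hf
  have hker' : φ.ker = A'.subgroupOf B' := by
    ext x
    rw [MonoidHom.mem_ker, ← hker x]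
    simp [φ, QuotientGroup.eq_one_iff]
  have hn : (A'.subgroupOf B').Normal := hker' ▸ φ.normal_ker
  refine ⟨hn, ?_⟩
  have e := (QuotientGroup.quotientMulEquivOfEq hker').symm.trans
    (QuotientGroup.quotientKerEquivOfSurjective φ hφs)
  exact isCyclic_of_surjective e.symm e.symm.surjective

set_option maxHeartbeats 1000000 in
lemma IsPolycyclic.of_normal {G : Type*} [Group G] (N : Subgroup G) [hNn : N.Normal]
    (h1 : IsPolycyclic ↥N) (h2 : IsPolycyclic (G ⧸ N)) : IsPolycyclic G := by
  obtain ⟨m, fN, hN0, hNl, hNs⟩ := h1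
  obtain ⟨k, fQ, hQ0, hQl, hQs⟩ := h2
  set ι := N.subtype with hι
  set π := QuotientGroup.mk' N with hπ
  have hιinj : Function.Injective ι := N.subtype_injective
  have hπsurj : Function.Surjective π := QuotientGroup.mk'_surjective N
  have hmapN : ((⊤ : Subgroup ↥N)).map ι = N := by
    rw [← MonoidHom.range_eq_map, Subgroup.range_subtype]
  have hcomapbot : (⊥ : Subgroup (G ⧸ N)).comap π = N := by
    ext x
    simp [Subgroup.mem_comap, hπ, QuotientGroup.eq_one_iff]
  let g : ℕ → Subgroup G := fun i =>
    if i ≤ m then (fN ⟨min i m, by omega⟩).map ι else (fQ ⟨min (i - m) k, by omega⟩).comap π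
  have hgle : ∀ i (h : i ≤ m), g i = (fN ⟨i, by omega⟩).map ι := by
    intro i h
    have hmin : min i m = i := min_eq_left h
    simp only [g, if_pos h, hmin]
  have hgge : ∀ i (h : m ≤ i) (h2 : i ≤ m + k), g i = (fQ ⟨i - m, by omega⟩).comap π := by
    intro i h h2
    by_cases hc : i ≤ m
    · have hi : i = m := le_antisymm hc h
      rw [hgle i hc]
      have h1 : (⟨i, by omega⟩ : Fin (m + 1)) = Fin.last m := by
        ext; simp [Fin.last, hi]
      have h2' : (⟨i - m, by omega⟩ : Fin (k + 1)) = 0 := by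
        ext; simp [hi]
      rw [h1, h2', hNl, hQ0, hmapN, hcomapbot]
    · have hmin : min (i - m) k = i - m := min_eq_left (by omega)
      simp only [g, if_neg hc, hmin]
  refine ⟨m + k, fun i => g i.val, ?_, ?_, ?_⟩
  · show g 0 = ⊥
    rw [hgle 0 (Nat.zero_le m)]
    have : (⟨0, by omega⟩ : Fin (m + 1)) = 0 := rfl
    rw [this, hN0, Subgroup.map_bot]
  · show g (m + k) = ⊤
    rw [hgge (m + k) (Nat.le_add_right m k) le_rfl]
    have : (⟨m + k - m, by omega⟩ : Fin (k + 1)) = Fin.last k := by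
      ext; simp [Fin.last]
    rw [this, hQl, Subgroup.comap_top]
  · intro i
    show g i.val ≤ g (i.val + 1) ∧
      ∃ _ : ((g i.val).subgroupOf (g (i.val + 1))).Normal,
        IsCyclic (↥(g (i.val + 1)) ⧸ (g i.val).subgroupOf (g (i.val + 1)))
    rcases lt_or_ge i.val m with hlt | hge
    · -- both in the N-part
      set j : Fin m := ⟨i.val, hlt⟩ with hj
      rw [hgle i.val (by omega), hgle (i.val + 1) (by omega)]
      have e1 : (⟨i.val, by omega⟩ : Fin (m + 1)) = j.castSucc := rfl
      have e2 : (⟨i.val + 1, by omega⟩ : Fin (m + 1)) = j.succ := rfl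
      rw [e1, e2]
      obtain ⟨hle, hnorm, hcyc⟩ := hNs j
      refine ⟨Subgroup.map_mono hle, ?_⟩
      set A := fN j.castSucc with hA
      set B := fN j.succ with hB
      let e : ↥B ≃* ↥(B.map ι) := B.equivMapOfInjective ι hιinj
      have hsurj : Function.Surjective (e.symm.toMonoidHom) := e.symm.surjective
      refine poly_step_transfer A B (A.map ι) (B.map ι) e.symm.toMonoidHom hsurj ?_ hnorm hcyc
      intro x
      have hx : ((x : G)) = ι (e.symm x) := by
        rw [← Subgroup.coe_equivMapOfInjective_apply B ι hιinj (e.symm x)]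
        simp [e]
      simp only [Subgroup.mem_subgroupOf, MulEquiv.coe_toMonoidHom]
      rw [← Subgroup.mem_map_iff_mem hιinj (K := A), ← hx]
    · -- both in the quotient part
      set j : Fin k := ⟨i.val - m, by omega⟩ with hj
      rw [hgge i.val hge (by omega), hgge (i.val + 1) (by omega) (by omega)]
      have e1 : (⟨i.val - m, by omega⟩ : Fin (k + 1)) = j.castSucc := rfl
      have e2 : (⟨i.val + 1 - m, by omega⟩ : Fin (k + 1)) = j.succ := by
        apply Fin.ext
        rw [Fin.val_succ]
        simp only [hj]
        omega
      rw [e1, e2]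
      obtain ⟨hle, hnorm, hcyc⟩ := hQs j
      refine ⟨Subgroup.comap_mono hle, ?_⟩
      set A := fQ j.castSucc with hA
      set B := fQ j.succ with hB
      let f : ↥(B.comap π) →* ↥B :=
        (π.comp (B.comap π).subtype).codRestrict B (fun x => x.2)
      have hfs : Function.Surjective f := by
        intro b
        obtain ⟨y, hy⟩ := hπsurj (b : G ⧸ N)
        exact ⟨⟨y, by simp [Subgroup.mem_comap, hy]⟩, Subtype.ext hy⟩
      refine poly_step_transfer A B (A.comap π) (B.comap π) f hfs ?_ hnorm hcyc
      intro x
      simp only [Subgroup.mem_subgroupOf, Subgroup.mem_comap, f, MonoidHom.codRestrict_apply,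
        MonoidHom.comp_apply, Subgroup.coe_subtype]
      exact Iff.rfl

lemma isCyclic_zpowers {G : Type*} [Group G] (g : G) : IsCyclic ↥(Subgroup.zpowers g) := by
  refine ⟨⟨⟨g, Subgroup.mem_zpowers g⟩, fun x => ?_⟩⟩
  obtain ⟨n, hn⟩ := Subgroup.mem_zpowers_iff.mp x.2
  exact Subgroup.mem_zpowers_iff.mpr ⟨n, Subtype.ext (by simpa using hn)⟩

lemma subsingleton_of_bot_eq_top' {G : Type*} [Group G]
    (h : (⊥ : Subgroup G) = ⊤) : Subsingleton G := by
  constructor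
  intro a b
  have ha : a ∈ (⊥ : Subgroup G) := h ▸ Subgroup.mem_top a
  have hb : b ∈ (⊥ : Subgroup G) := h ▸ Subgroup.mem_top b
  rw [Subgroup.mem_bot] at ha hb
  rw [ha, hb]

universe u

lemma isPolycyclic_of_comm_aux (n : ℕ) :
    ∀ {G : Type u} [Group G], (∀ a b : G, a * b = b * a) →
      ∀ S : Finset G, S.card ≤ n → Subgroup.closure (S : Set G) = ⊤ → IsPolycyclic G := by
  induction n with
  | zero =>
    intro G _ hab S hcard hS
    have hSe : S = ∅ := Finset.card_eq_zero.mp (Nat.le_zero.mp hcard)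
    subst hSe
    haveI : Subsingleton G := subsingleton_of_bot_eq_top' (by
      simpa [Subgroup.closure_empty] using hS)
    exact isPolycyclic_of_subsingleton
  | succ n ih =>
    intro G _ hab S hcard hS
    haveI := Classical.decEq G
    rcases S.eq_empty_or_nonempty with rfl | ⟨g, hg⟩
    · haveI : Subsingleton G := subsingleton_of_bot_eq_top' (by
        simpa [Subgroup.closure_empty] using hS)
      exact isPolycyclic_of_subsingleton
    · set N := Subgroup.zpowers g with hN
      haveI hNn : N.Normal := by
        constructor
        intro x hx gg
        have : gg * x * gg⁻¹ = x := by rw [hab gg x]; group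
        rwa [this]
      set π := QuotientGroup.mk' N with hπ
      have hπs : Function.Surjective π := QuotientGroup.mk'_surjective N
      refine IsPolycyclic.of_normal N (isPolycyclic_of_isCyclic (isCyclic_zpowers g)) ?_
      set S' : Finset (G ⧸ N) := (S.erase g).image π with hS'
      refine ih (fun a b => ?_) S' ?_ ?_
      · obtain ⟨x, rfl⟩ := hπs a
        obtain ⟨y, rfl⟩ := hπs b
        rw [← map_mul, ← map_mul, hab]
      · calc S'.card ≤ (S.erase g).card := Finset.card_image_le
        _ = S.card - 1 := Finset.card_erase_of_mem hg
        _ ≤ n := by omega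
      · have h1 : Subgroup.closure (π '' ↑S) = ⊤ := by
          rw [← MonoidHom.map_closure, hS, Subgroup.map_top_of_surjective π hπs]
        rw [eq_top_iff, ← h1]
        rw [Subgroup.closure_le]
        rintro x ⟨s, hs, rfl⟩
        by_cases hsg : s = g
        · subst hsg
          have : π s = 1 := by
            rw [hπ, QuotientGroup.mk'_apply, QuotientGroup.eq_one_iff]
            exact Subgroup.mem_zpowers s
          rw [this]
          exact Subgroup.one_mem _
        · exact Subgroup.subset_closure (by
            simp only [hS', Finset.coe_image, Set.mem_image]
            exact ⟨s, by simp [Finset.mem_erase, hsg, hs], rfl⟩)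

lemma isPolycyclic_of_comm {G : Type*} [Group G] (hab : ∀ a b : G, a * b = b * a)
    (hfg : Group.FG G) : IsPolycyclic G := by
  obtain ⟨S, hS1, hS2⟩ := Group.fg_iff.mp hfg
  exact isPolycyclic_of_comm_aux hS2.toFinset.card hab hS2.toFinset le_rfl
    (by rwa [Set.Finite.coe_toFinset])

lemma noeth_solv_aux (n : ℕ) :
    ∀ {G : Type u} [Group G], Group.FG G → (∀ H : Subgroup G, H.FG) →
      derivedSeries G n = ⊥ → IsPolycyclic G := by
  induction n with
  | zero =>
    intro G _ _ _ hd
    rw [derivedSeries_zero] at hd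
    haveI : Subsingleton G := subsingleton_of_bot_eq_top' hd.symm
    exact isPolycyclic_of_subsingleton
  | succ n ih =>
    intro G _ hfg hnoeth hd
    set N := derivedSeries G 1 with hN
    haveI hNn : N.Normal := derivedSeries_normal G 1
    -- N is finitely generated and Noetherian
    have hfgN : Group.FG ↥N := by
      rw [Group.fg_iff_subgroup_fg]; exact hnoeth N
    have hnoethN : ∀ K : Subgroup ↥N, K.FG := by
      intro K
      have h1 : (K.map N.subtype).FG := hnoeth _
      rw [← Group.fg_iff_subgroup_fg] at h1 ⊢
      haveI := h1
      have hsurj : Function.Surjective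
          ((K.equivMapOfInjective N.subtype N.subtype_injective).symm.toMonoidHom) :=
        (K.equivMapOfInjective N.subtype N.subtype_injective).symm.surjective
      exact Group.fg_of_surjective hsurj
    -- derived length of N is at most n
    have hmap : ∀ t : ℕ, (derivedSeries ↥N t).map N.subtype ≤ derivedSeries G (t + 1) := by
      intro t
      induction t with
      | zero =>
        rw [derivedSeries_zero, ← MonoidHom.range_eq_map, Subgroup.range_subtype]
      | succ t iht =>
        rw [derivedSeries_succ, Subgroup.map_commutator]
        calc ⁅(derivedSeries ↥N t).map N.subtype, (derivedSeries ↥N t).map N.subtype⁆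
            ≤ ⁅derivedSeries G (t + 1), derivedSeries G (t + 1)⁆ :=
              Subgroup.commutator_mono iht iht
          _ = derivedSeries G (t + 2) := (derivedSeries_succ G (t + 1)).symm
    have hdN : derivedSeries ↥N n = ⊥ := by
      have h2 : (derivedSeries ↥N n).map N.subtype = ⊥ :=
        le_bot_iff.mp (hd ▸ hmap n)
      rwa [Subgroup.map_eq_bot_iff_of_injective _ N.subtype_injective] at h2
    have hNpoly : IsPolycyclic ↥N := ih hfgN hnoethN hdN
    -- the quotient is abelian and finitely generated
    have habQ : ∀ a b : G ⧸ N, a * b = b * a := by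
      intro a b
      obtain ⟨x, rfl⟩ := QuotientGroup.mk'_surjective N a
      obtain ⟨y, rfl⟩ := QuotientGroup.mk'_surjective N b
      simp only [QuotientGroup.mk'_apply]
      rw [← QuotientGroup.mk_mul, ← QuotientGroup.mk_mul, QuotientGroup.eq]
      open scoped commutatorElement in
      have heq : (x * y)⁻¹ * (y * x) = ⁅y⁻¹, x⁻¹⁆ := by group
      rw [heq, hN, derivedSeries_succ, derivedSeries_zero]
      exact Subgroup.commutator_mem_commutator (Subgroup.mem_top _) (Subgroup.mem_top _)
    haveI := hfg
    have hfgQ : Group.FG (G ⧸ N) := Group.fg_of_surjective (QuotientGroup.mk'_surjective N)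
    exact IsPolycyclic.of_normal N hNpoly (isPolycyclic_of_comm habQ hfgQ)

theorem noetherian_solvable_is_polycyclic
    {G : Type*} [Group G] (hfg : Group.FG G) (hsolv : IsSolvable G)
    (hnoeth : ∀ H : Subgroup G, H.FG) :
    IsPolycyclic G := by
  obtain ⟨n, hn⟩ := hsolv.solvable
  exact noeth_solv_aux n hfg hnoeth hn
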